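/- For every integer n ≥ 2 and every λ with 1/(n+1) ≤ λ ≤ λ₊(n) = (3/(n+2))·(1 − √((n−1)/(3(n+1)))), the maximum of p_ℓ(n,λ) over ℓ ∈ {0,…,n+1} is attained at ℓ = n−1. -/

import Mathlib

/-- The output distribution p(n,λ) of the general attenuator with Fock environment |n⟩,
for ℓ = 0, …, n+1 (the case ℓ = n+1 is the continuous extension of the formula
… · λ^(n-ℓ) · …, which involves λ⁻¹, valid for all λ ∈ (0,1)). -/
noncomputable def pdist (n ℓ : ℕ) (t : ℝ) : ℝ :=
  if ℓ ≤ n then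
    1 / (2 * ((n : ℝ) + 1) * (1 - t)) * ((n + 1).choose ℓ : ℝ) * (1 - t) ^ ℓ * t ^ (n - ℓ) *
      ((1 - t) * ((n : ℝ) - (ℓ : ℝ) + 1) + (((n : ℝ) + 1) * (1 - t) - (ℓ : ℝ)) ^ 2)
  else ((n : ℝ) + 1) * t * (1 - t) ^ n / 2

/-- The output distribution q(n,λ) (spectrum of the joint output state). -/
noncomputable def qdist (n ℓ : ℕ) (t : ℝ) : ℝ :=
  if ℓ ≤ n then
    1 / (2 * ((n : ℝ) + 1) * (1 - t)) * ((n + 1).choose ℓ : ℝ) * (1 - t) ^ ℓ * t ^ (n - ℓ) *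
      (t * (ℓ : ℝ) + (((n : ℝ) + 1) * (1 - t) - (ℓ : ℝ)) ^ 2)
  else (1 - t) ^ n * (1 + ((n : ℝ) + 1) * t) / 2


noncomputable def lamPlus (n : ℕ) : ℝ :=
  3 / ((n : ℝ) + 2) * (1 - Real.sqrt (((n : ℝ) - 1) / (3 * ((n : ℝ) + 1))))

lemma keyD (s t u : ℝ) (hs1 : 1 ≤ s) (hs32 : s ≤ 3/2) (ht : 0 < t)
    (hQ : 0 ≤ s^2 + s*t - 6*s + 6) (hu : 2 ≤ u) :
    (s - u*t) * ((1-t)*(u+1) + (u+1-s)^2) ≤ (u+1)*(1-t)*((1-t)*u + (u-s)^2) := by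
  have hw : (0:ℝ) ≤ u - 2 := by linarith
  have h1 : 0 ≤ (3-s)*(s^2+s*t-6*s+6) := mul_nonneg (by linarith) hQ
  have h2 : 0 ≤ (u-2)^3 := by positivity
  have h3 : 0 ≤ (8-3*s)*(u-2)^2 := mul_nonneg (by linarith) (sq_nonneg _)
  have h4 : 0 ≤ (21-17*s+3*s^2+s*t)*(u-2) := by
    apply mul_nonneg _ hw
    nlinarith [mul_nonneg (by linarith : (0:ℝ) ≤ s-1) (by linarith : (0:ℝ) ≤ 3/2-s),
      mul_nonneg (by linarith : (0:ℝ) ≤ s) ht.le]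
  nlinarith [h1, h2, h3, h4]

lemma key2 (s t : ℝ) (hs1 : 1 ≤ s) (hs32 : s ≤ 3/2) (ht : 0 < t) (ht2 : t ≤ 1/2) :
    2*(1-t)*((1-t) + (1-s)^2) ≤ (s-t)*(2*(1-t) + (2-s)^2) := by
  nlinarith [mul_nonneg (by linarith : (0:ℝ) ≤ s-1) (by linarith : (0:ℝ) ≤ 3/2-s),
    mul_nonneg (by linarith : (0:ℝ) ≤ s) ht.le, sq_nonneg (s-1), sq_nonneg (3/2-s)]

lemma key3 (s t : ℝ) (hs1 : 1 ≤ s) (hs32 : s ≤ 3/2) (ht : 0 < t) (h3t : 3*t ≤ s) :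
    2*s*(1-t)^2 ≤ (s-t)*(2*(1-t) + (2-s)^2) := by
  nlinarith [mul_nonneg (by linarith : (0:ℝ) ≤ s-1) (by linarith : (0:ℝ) ≤ 3/2-s),
    mul_nonneg (by linarith : (0:ℝ) ≤ s - 3*t) ht.le, sq_nonneg (s-1), sq_nonneg (3/2-s),
    mul_pos ht ht]

lemma pdist_step (n ℓ : ℕ) (t : ℝ) (hl : ℓ + 2 ≤ n) (ht : 0 < t)
    (hs1 : 1 ≤ ((n:ℝ)+1)*t) (hs32 : ((n:ℝ)+1)*t ≤ 3/2)
    (hQ : 0 ≤ (((n:ℝ)+1)*t)^2 + (((n:ℝ)+1)*t)*t - 6*(((n:ℝ)+1)*t) + 6) :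
    pdist n ℓ t ≤ pdist n (ℓ+1) t := by
  have hn2 : (2:ℝ) ≤ (n:ℝ) := by exact_mod_cast (show 2 ≤ n by omega)
  have hx : (0:ℝ) < 1 - t := by
    have h3 := mul_le_mul_of_nonneg_right (show (3:ℝ) ≤ (n:ℝ)+1 by linarith) ht.le
    linarith
  set s : ℝ := ((n:ℝ)+1)*t with hs
  set x : ℝ := 1 - t with hxdef
  set u : ℝ := (n:ℝ) - (ℓ:ℝ) with hu
  have hu2 : 2 ≤ u := by
    have : ((ℓ:ℝ) + 2) ≤ (n:ℝ) := by exact_mod_cast Nat.cast_le.mpr hl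
    simp only [hu]; linarith
  have hcho : ((n+1).choose (ℓ+1) : ℝ) * ((ℓ:ℝ)+1) = ((n+1).choose ℓ : ℝ) * (u + 1) := by
    have h := Nat.choose_succ_right_eq (n+1) ℓ
    have hsub : ((n + 1 - ℓ : ℕ) : ℝ) = (n:ℝ) + 1 - (ℓ:ℝ) := by
      have h' : ℓ ≤ n + 1 := by omega
      push_cast [Nat.cast_sub h']; ring
    have h' : ((n+1).choose (ℓ+1) : ℝ) * ((ℓ:ℝ)+1) = ((n+1).choose ℓ : ℝ) * ((n+1-ℓ : ℕ):ℝ) := by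
      exact_mod_cast congrArg (Nat.cast : ℕ → ℝ) h
    rw [h', hsub, hu]; ring
  have hln : ℓ ≤ n := by omega
  have hl1n : ℓ + 1 ≤ n := by omega
  have hm : n - ℓ = (n - (ℓ+1)) + 1 := by omega
  set m : ℕ := n - (ℓ+1) with hmdef
  have hp1 : pdist n ℓ t = (1 / (2 * ((n:ℝ) + 1) * x) * ((n+1).choose ℓ : ℝ) * x ^ ℓ * t ^ m)
      * (t * (x*(u+1) + (u+1-s)^2)) := by
    rw [pdist, if_pos hln, hm, pow_succ]
    rw [hu, hs, hxdef]; ring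
  have hp2 : pdist n (ℓ+1) t = (1 / (2 * ((n:ℝ) + 1) * x) * ((n+1).choose (ℓ+1) : ℝ) * x ^ ℓ * t ^ m)
      * (x * (x*u + (u-s)^2)) := by
    rw [pdist, if_pos hl1n]
    have h' : n - (ℓ+1) = m := rfl
    rw [h', hu, hs, hxdef]
    push_cast
    ring
  have hc0 : (0:ℝ) ≤ 1 / (2 * ((n:ℝ) + 1) * x) * ((n+1).choose ℓ : ℝ) * x ^ ℓ * t ^ m := by
    have hn0 : (0:ℝ) < (n:ℝ) + 1 := by positivity
    positivity
  have hkey : ((ℓ:ℝ)+1) * (t * (x*(u+1) + (u+1-s)^2)) ≤ (u+1) * (x * (x*u + (u-s)^2)) := by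
    have h := keyD s t u hs1 hs32 ht hQ hu2
    have heq : s - u*t = ((ℓ:ℝ)+1)*t := by rw [hs, hu]; ring
    rw [heq] at h
    calc ((ℓ:ℝ)+1) * (t * (x*(u+1) + (u+1-s)^2)) = ((ℓ:ℝ)+1)*t * ((1-t)*(u+1) + (u+1-s)^2) := by
          rw [hxdef]; ring
      _ ≤ (u+1)*(1-t)*((1-t)*u + (u-s)^2) := h
      _ = (u+1) * (x * (x*u + (u-s)^2)) := by rw [hxdef]; ring
  rw [hp1, hp2]
  have hpos : (0:ℝ) < (ℓ:ℝ) + 1 := by positivity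
  rw [← mul_le_mul_iff_right₀ hpos]
  calc ((ℓ:ℝ)+1) * ((1 / (2 * ((n:ℝ) + 1) * x) * ((n+1).choose ℓ : ℝ) * x ^ ℓ * t ^ m)
      * (t * (x*(u+1) + (u+1-s)^2)))
      = (1 / (2 * ((n:ℝ) + 1) * x) * ((n+1).choose ℓ : ℝ) * x ^ ℓ * t ^ m)
        * (((ℓ:ℝ)+1) * (t * (x*(u+1) + (u+1-s)^2))) := by ring
    _ ≤ (1 / (2 * ((n:ℝ) + 1) * x) * ((n+1).choose ℓ : ℝ) * x ^ ℓ * t ^ m)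
        * ((u+1) * (x * (x*u + (u-s)^2))) := mul_le_mul_of_nonneg_left hkey hc0
    _ = (1 / (2 * ((n:ℝ) + 1) * x) * (((n+1).choose ℓ : ℝ) * (u+1)) * x ^ ℓ * t ^ m)
        * (x * (x*u + (u-s)^2)) := by ring
    _ = ((ℓ:ℝ)+1) * ((1 / (2 * ((n:ℝ) + 1) * x) * ((n+1).choose (ℓ+1) : ℝ) * x ^ ℓ * t ^ m)
        * (x * (x*u + (u-s)^2))) := by rw [← hcho]; ring

lemma choose_pred_cast (n : ℕ) (hn : 2 ≤ n) :
    ((n+1).choose (n-1) : ℝ) * 2 = ((n:ℝ)+1) * (n:ℝ) := by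
  have h1 : (n+1).choose (n-1) = (n+1).choose 2 := by
    have h := Nat.choose_symm (show 2 ≤ n + 1 by omega)
    rw [show n + 1 - 2 = n - 1 by omega] at h
    exact h
  have hdvd : (2:ℕ) ∣ (n+1) * n := by
    rw [mul_comm]; exact (Nat.even_mul_succ_self n).two_dvd
  have h2 : (n+1).choose 2 * 2 = (n+1) * n := by
    rw [Nat.choose_two_right, show n + 1 - 1 = n from rfl]
    exact Nat.div_mul_cancel hdvd
  have h3 : (n+1).choose (n-1) * 2 = (n+1) * n := by rw [h1]; exact h2
  exact_mod_cast congrArg (Nat.cast : ℕ → ℝ) h3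

lemma pdist_case_n (n : ℕ) (t : ℝ) (hn : 2 ≤ n) (ht : 0 < t) (ht2 : t ≤ 1/2)
    (hs1 : 1 ≤ ((n:ℝ)+1)*t) (hs32 : ((n:ℝ)+1)*t ≤ 3/2) :
    pdist n n t ≤ pdist n (n-1) t := by
  have hx : (0:ℝ) < 1 - t := by linarith
  have hC := choose_pred_cast n hn
  have hcast : ((n-1 : ℕ) : ℝ) = (n:ℝ) - 1 := by
    have h1 : 1 ≤ n := by omega
    push_cast [Nat.cast_sub h1]; ring
  have hchn : (n+1).choose n = n + 1 := Nat.choose_succ_self_right n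
  set s : ℝ := ((n:ℝ)+1)*t with hs
  set x : ℝ := 1 - t with hxdef
  have hpn : pdist n n t = (1 / (2 * ((n:ℝ) + 1) * x) * x ^ (n-1))
      * (((n:ℝ)+1) * (x * (x + (1-s)^2))) := by
    rw [pdist, if_pos (le_refl n), hchn, Nat.sub_self, pow_zero,
      show (1-t)^n = (1-t)^(n-1)*(1-t) from by rw [← pow_succ, show n-1+1 = n by omega]]
    rw [hs, hxdef]
    push_cast
    ring
  have hpn1 : pdist n (n-1) t = (1 / (2 * ((n:ℝ) + 1) * x) * x ^ (n-1))
      * (((n+1).choose (n-1) : ℝ) * (t * (2*x + (2-s)^2))) := by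
    rw [pdist, if_pos (show n - 1 ≤ n by omega), show n - (n-1) = 1 by omega, pow_one]
    rw [hcast, hs, hxdef]
    ring
  rw [hpn, hpn1]
  have hP : (0:ℝ) ≤ 1 / (2 * ((n:ℝ) + 1) * x) * x ^ (n-1) := by
    have hn0 : (0:ℝ) < (n:ℝ) + 1 := by positivity
    positivity
  apply mul_le_mul_of_nonneg_left _ hP
  -- need: (n+1) * (x * (x + (1-s)^2)) ≤ C * (t * (2x + (2-s)^2))
  have hk := key2 s t hs1 hs32 ht ht2
  have h2pos : (0:ℝ) < 2 := by norm_num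
  rw [← mul_le_mul_iff_right₀ h2pos]
  calc 2 * (((n:ℝ)+1) * (x * (x + (1-s)^2)))
      = ((n:ℝ)+1) * (2*(1-t)*((1-t) + (1-s)^2)) := by rw [hxdef]; ring
    _ ≤ ((n:ℝ)+1) * ((s-t)*(2*(1-t) + (2-s)^2)) := by
        apply mul_le_mul_of_nonneg_left hk (by positivity)
    _ = 2 * (((n+1).choose (n-1) : ℝ) * (t * (2*x + (2-s)^2))) := by
        rw [hxdef, hs]
        linear_combination (-(t * (2*(1-t) + (2-((n:ℝ)+1)*t)^2))) * hC

lemma pdist_case_n1 (n : ℕ) (t : ℝ) (hn : 2 ≤ n) (ht : 0 < t) (ht2 : t ≤ 1/2)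
    (hs1 : 1 ≤ ((n:ℝ)+1)*t) (hs32 : ((n:ℝ)+1)*t ≤ 3/2) :
    pdist n (n+1) t ≤ pdist n (n-1) t := by
  have hx : (0:ℝ) < 1 - t := by linarith
  have hC := choose_pred_cast n hn
  have hcast : ((n-1 : ℕ) : ℝ) = (n:ℝ) - 1 := by
    have h1 : 1 ≤ n := by omega
    push_cast [Nat.cast_sub h1]; ring
  set s : ℝ := ((n:ℝ)+1)*t with hs
  set x : ℝ := 1 - t with hxdef
  have h3t : 3*t ≤ s := by
    rw [hs]
    have : (3:ℝ) ≤ (n:ℝ) + 1 := by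
      have : (2:ℝ) ≤ (n:ℝ) := by exact_mod_cast hn
      linarith
    nlinarith
  have hpn1 : pdist n (n+1) t = (1 / (2 * ((n:ℝ) + 1) * x) * x ^ (n-2) * x * t)
      * (((n:ℝ)+1)^2 * (x * x)) := by
    have hxne : (1 - t) ≠ 0 := by linarith
    have hnne : ((n:ℝ)+1) ≠ 0 := by positivity
    rw [pdist, if_neg (by omega),
      show (1-t)^n = (1-t)^(n-2)*(1-t)*(1-t) from by
        rw [← pow_succ, ← pow_succ, show n-2+1+1 = n by omega]]
    rw [hxdef]
    field_simp
  have hpm1 : pdist n (n-1) t = (1 / (2 * ((n:ℝ) + 1) * x) * x ^ (n-2) * x * t)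
      * (((n+1).choose (n-1) : ℝ) * (2*x + (2-s)^2)) := by
    rw [pdist, if_pos (show n - 1 ≤ n by omega), show n - (n-1) = 1 by omega, pow_one,
      show (1-t)^(n-1) = (1-t)^(n-2)*(1-t) from by rw [← pow_succ, show n-2+1 = n-1 by omega]]
    rw [hcast, hs, hxdef]
    ring
  rw [hpn1, hpm1]
  have hP : (0:ℝ) ≤ 1 / (2 * ((n:ℝ) + 1) * x) * x ^ (n-2) * x * t := by
    have hn0 : (0:ℝ) < (n:ℝ) + 1 := by positivity
    positivity
  apply mul_le_mul_of_nonneg_left _ hP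
  have hk := key3 s t hs1 hs32 ht h3t
  have h2t : (0:ℝ) < 2 * t := by linarith
  rw [← mul_le_mul_iff_right₀ h2t]
  calc (2*t) * (((n:ℝ)+1)^2 * (x * x))
      = ((n:ℝ)+1) * (2*s*(1-t)^2) := by rw [hxdef, hs]; ring
    _ ≤ ((n:ℝ)+1) * ((s-t)*(2*(1-t) + (2-s)^2)) := by
        apply mul_le_mul_of_nonneg_left hk (by positivity)
    _ = (2*t) * (((n+1).choose (n-1) : ℝ) * (2*x + (2-s)^2)) := by
        rw [hxdef, hs]
        linear_combination (-(t * (2*(1-t) + (2-((n:ℝ)+1)*t)^2))) * hC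

theorem pdist_max_at_n_sub_one (n : ℕ) (hn : 2 ≤ n) (t : ℝ)
    (h1 : 1 / ((n : ℝ) + 1) ≤ t) (h2 : t ≤ lamPlus n) :
    ∀ ℓ ≤ n + 1, pdist n ℓ t ≤ pdist n (n - 1) t := by
  have hn2 : (2:ℝ) ≤ (n:ℝ) := by exact_mod_cast hn
  have hnp : (0:ℝ) < (n:ℝ) + 1 := by linarith
  have ht : 0 < t := lt_of_lt_of_le (by positivity) h1
  have hs1 : 1 ≤ ((n:ℝ)+1)*t := by
    rw [div_le_iff₀ hnp] at h1
    nlinarith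
  have h3t : 3*t ≤ ((n:ℝ)+1)*t := by nlinarith
  -- facts from h2
  have hr : (0:ℝ) ≤ ((n:ℝ) - 1) / (3 * ((n:ℝ) + 1)) := div_nonneg (by linarith) (by positivity)
  have hsq := Real.sqrt_nonneg (((n:ℝ) - 1) / (3 * ((n:ℝ) + 1)))
  have hn2p : (0:ℝ) < (n:ℝ) + 2 := by linarith
  have h2' : t * ((n:ℝ)+2) ≤ 3 * (1 - Real.sqrt (((n:ℝ) - 1) / (3 * ((n:ℝ) + 1)))) := by
    rw [lamPlus] at h2
    rw [show (3:ℝ) / ((n:ℝ) + 2) * (1 - Real.sqrt (((n:ℝ) - 1) / (3 * ((n:ℝ) + 1))))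
        = 3 * (1 - Real.sqrt (((n:ℝ) - 1) / (3 * ((n:ℝ) + 1)))) / ((n:ℝ)+2) from by ring] at h2
    exact (le_div_iff₀ hn2p).mp h2
  have hsl : Real.sqrt (((n:ℝ) - 1) / (3 * ((n:ℝ) + 1))) ≤ 1 - ((n:ℝ)+2)*t/3 := by linarith
  have hr2 : ((n:ℝ) - 1) / (3 * ((n:ℝ) + 1)) ≤ (1 - ((n:ℝ)+2)*t/3)^2 := by
    rw [← Real.sq_sqrt hr]
    exact pow_le_pow_left₀ hsq hsl 2
  have hr3 : (n:ℝ) - 1 ≤ (1 - ((n:ℝ)+2)*t/3)^2 * (3 * ((n:ℝ) + 1)) := by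
    exact (div_le_iff₀ (by positivity)).mp hr2
  have hQ' : 0 ≤ (((n:ℝ)+2)/3) * (((n:ℝ)+1)*((n:ℝ)+2)*t^2 - 6*((n:ℝ)+1)*t + 6) := by
    have hid : (((n:ℝ)+2)/3) * (((n:ℝ)+1)*((n:ℝ)+2)*t^2 - 6*((n:ℝ)+1)*t + 6)
        = (1 - ((n:ℝ)+2)*t/3)^2 * (3 * ((n:ℝ) + 1)) - ((n:ℝ) - 1) := by ring
    rw [hid]; linarith
  have hQ0 : 0 ≤ ((n:ℝ)+1)*((n:ℝ)+2)*t^2 - 6*((n:ℝ)+1)*t + 6 := by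
    by_contra hneg
    push_neg at hneg
    nlinarith [mul_pos (show (0:ℝ) < ((n:ℝ)+2)/3 by positivity) (neg_pos.mpr hneg)]
  have hQ : 0 ≤ (((n:ℝ)+1)*t)^2 + (((n:ℝ)+1)*t)*t - 6*(((n:ℝ)+1)*t) + 6 := by
    have e : (((n:ℝ)+1)*t)^2 + (((n:ℝ)+1)*t)*t - 6*(((n:ℝ)+1)*t) + 6
        = ((n:ℝ)+1)*((n:ℝ)+2)*t^2 - 6*((n:ℝ)+1)*t + 6 := by ring
    rw [e]; exact hQ0
  have hst3 : ((n:ℝ)+1)*t + t ≤ 3 := by linarith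
  have hs32 : ((n:ℝ)+1)*t ≤ 3/2 := by
    by_contra hc
    push_neg at hc
    have hsp : (0:ℝ) < ((n:ℝ)+1)*t := by linarith
    have hst : (((n:ℝ)+1)*t)*t ≤ (((n:ℝ)+1)*t)*((((n:ℝ)+1)*t)/3) := by
      apply mul_le_mul_of_nonneg_left _ hsp.le
      linarith
    nlinarith [mul_pos (show (0:ℝ) < 2*(((n:ℝ)+1)*t)-3 by linarith)
      (show (0:ℝ) < 3-((n:ℝ)+1)*t by linarith)]
  have ht2 : t ≤ 1/2 := by linarith
  -- the increasing chain up to n-1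
  have chain : ∀ k, pdist n (n-1-k) t ≤ pdist n (n-1) t := by
    intro k
    induction k with
    | zero => simp
    | succ k ih =>
      by_cases hk : k + 1 ≤ n - 1
      · have hstep := pdist_step n (n-1-(k+1)) t (by omega) ht hs1 hs32 hQ
        rw [show n-1-(k+1)+1 = n-1-k from by omega] at hstep
        exact le_trans hstep ih
      · rw [show n-1-(k+1) = n-1-k from by omega]
        exact ih
  intro ℓ hℓ
  have hcases : ℓ ≤ n - 1 ∨ ℓ = n ∨ ℓ = n + 1 := by omega
  rcases hcases with hc | hc | hc
  · have h := chain (n-1-ℓ)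
    rwa [show n-1-(n-1-ℓ) = ℓ from by omega] at h
  · rw [hc]; exact pdist_case_n n t hn ht ht2 hs1 hs32
  · rw [hc]; exact pdist_case_n1 n t hn ht ht2 hs1 hs32
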